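/- Every multicyclic continuous linear operator on φ fails to be surjective. -/

import Mathlib

open Polynomial Module

/-- Every multicyclic continuous linear operator on `φ` fails to be surjective. Here
`φ` is identified with the polynomial space `K[z]` (every linear map on `φ` is
continuous, and every linear subspace is closed so dense span means span equals `φ`);
`T` is multicyclic if there is a finite dimensional subspace `L` with
`span(⋃_{n≥0} T^n(L)) = φ`. -/
theorem stmt_14 (𝕜 : Type*) [RCLike 𝕜] (T : Module.End 𝕜 (Polynomial 𝕜))
    (hmc : ∃ L : Submodule 𝕜 (Polynomial 𝕜), FiniteDimensional 𝕜 L ∧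
      (⨆ n : ℕ, Submodule.map (T ^ n) L) = ⊤) :
    ¬ Function.Surjective ⇑T := by
  classical
  intro hsurj
  obtain ⟨L, hLfd, hLtop⟩ := hmc
  obtain ⟨s, hs⟩ := (Submodule.fg_iff_finiteDimensional L).mpr hLfd
  set e := Module.AEval'.of T with he
  have hpow : ∀ (n : ℕ) (y : Polynomial 𝕜), (X : 𝕜[X])^n • e y = e ((T^n) y) := by
    intro n y
    induction n with
    | zero => simp
    | succ n ih =>
      rw [pow_succ', mul_smul, ih, Module.AEval'.X_smul_of, pow_succ', Module.End.mul_apply]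
  have key : (⊤ : Submodule 𝕜 (Polynomial 𝕜)) ≤
      (Submodule.restrictScalars 𝕜 (Submodule.span (Polynomial 𝕜) (⇑e '' ↑s))).comap
        (e : Polynomial 𝕜 →ₗ[𝕜] Module.AEval' T) := by
    rw [← hLtop]
    refine iSup_le fun n => ?_
    rintro x ⟨y, hy, rfl⟩
    simp only [Submodule.mem_comap, Submodule.restrictScalars_mem, LinearEquiv.coe_coe]
    rw [← hpow]
    refine Submodule.smul_mem _ _ ?_
    refine Submodule.span_le_restrictScalars 𝕜 (Polynomial 𝕜) (⇑e '' ↑s) ?_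
    rw [← hs] at hy
    exact Submodule.apply_mem_span_image_of_mem_span (e : Polynomial 𝕜 →ₗ[𝕜] Module.AEval' T) hy
  have htop : Submodule.span (Polynomial 𝕜) (⇑e '' ↑s) = ⊤ := by
    rw [eq_top_iff]
    rintro v -
    have hv := key (Submodule.mem_top (x := e.symm v))
    simpa using hv
  have hfg : (⊤ : Submodule (Polynomial 𝕜) (Module.AEval' T)).FG := by
    refine ⟨s.image ⇑e, ?_⟩
    rw [Finset.coe_image, htop]
  have hle : (⊤ : Submodule (Polynomial 𝕜) (Module.AEval' T)) ≤ (Ideal.span {(X : 𝕜[X])}) • ⊤ := by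
    rintro v -
    obtain ⟨w, hw⟩ := hsurj (e.symm v)
    have hv : v = (X : 𝕜[X]) • e w := by
      rw [Module.AEval'.X_smul_of, hw, LinearEquiv.apply_symm_apply]
    rw [hv]
    exact Submodule.smul_mem_smul (Ideal.subset_span rfl) Submodule.mem_top
  obtain ⟨r, hrX, hr0⟩ := Submodule.exists_sub_one_mem_and_smul_eq_zero_of_fg_of_le_smul
    (Ideal.span {(X : 𝕜[X])}) ⊤ hfg hle
  have hann : ∀ w : Polynomial 𝕜, (aeval T r) w = 0 := fun w => by
    have h := congrArg e.symm (hr0 (e w) Submodule.mem_top)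
    exact (LinearEquiv.map_eq_zero_iff e).mp (hr0 (e w) Submodule.mem_top)
  have hc0 : r.coeff 0 = 1 := by
    obtain ⟨t, ht⟩ := Ideal.mem_span_singleton.mp hrX
    have h1 : (r - 1).coeff 0 = 0 := by rw [ht, mul_coeff_zero, coeff_X_zero, zero_mul]
    rw [coeff_sub, coeff_one_zero, sub_eq_zero] at h1
    exact h1
  have hrne : r ≠ 0 := fun h => by simp [h] at hc0
  set d := r.natDegree with hd
  by_cases hd0 : d = 0
  · have hr1 : r = 1 := by
      rw [Polynomial.eq_C_of_natDegree_eq_zero hd0, hc0, map_one]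
    have h := hann 1
    simp [hr1] at h
  · have hdpos : 0 < d := Nat.pos_of_ne_zero hd0
    set G : Set (Polynomial 𝕜) := ⋃ i ∈ Set.Iio d, (⇑(T^i)) '' ↑s with hG
    have hGfin : G.Finite :=
      Set.Finite.biUnion (Set.finite_Iio d) (fun i _ => s.finite_toSet.image _)
    set P := Submodule.span 𝕜 G with hP
    have hsubG : ∀ i < d, ∀ x ∈ s, (T^i) x ∈ G := fun i hi x hx =>
      Set.mem_biUnion hi ⟨x, hx, rfl⟩
    have hkey : ∀ x ∈ s, (T^d) x ∈ P := by
      intro x hx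
      have h0 : (∑ i ∈ Finset.range (d+1), r.coeff i • (T ^ i) x) = 0 := by
        have h := hann x
        rw [aeval_eq_sum_range] at h
        simpa using h
      rw [Finset.sum_range_succ] at h0
      have hld : r.coeff d ≠ 0 := by
        have h := Polynomial.leadingCoeff_ne_zero.mpr hrne
        rwa [Polynomial.leadingCoeff] at h
      have h2 : (T^d) x = (r.coeff d)⁻¹ • (- ∑ i ∈ Finset.range d, r.coeff i • (T ^ i) x) := by
        have h1 : r.coeff d • (T^d) x = - ∑ i ∈ Finset.range d, r.coeff i • (T ^ i) x :=
          eq_neg_of_add_eq_zero_right h0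
        rw [← h1, smul_smul, inv_mul_cancel₀ hld, one_smul]
      rw [h2]
      exact Submodule.smul_mem _ _ (Submodule.neg_mem _ (Submodule.sum_mem _ fun i hi =>
        Submodule.smul_mem _ _ (Submodule.subset_span
          (hsubG i (Finset.mem_range.mp hi) x hx))))
    have hinv : ∀ g ∈ G, T g ∈ P := by
      intro g hg
      rw [hG, Set.mem_iUnion₂] at hg
      obtain ⟨i, hi, x, hx, rfl⟩ := hg
      have heq : T ((T^i) x) = (T^(i+1)) x := by rw [pow_succ', Module.End.mul_apply]
      rw [heq]
      rcases lt_or_eq_of_le (Nat.succ_le_of_lt hi) with h | h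
      · exact Submodule.subset_span (hsubG _ h x hx)
      · have h' : i + 1 = d := h
        rw [h']; exact hkey x hx
    have hpmem : P ∈ (Algebra.lsmul 𝕜 𝕜 (Polynomial 𝕜) T).invtSubmodule := by
      rw [Module.End.mem_invtSubmodule, hP, Submodule.span_le]
      intro g hg
      simp only [SetLike.mem_coe, Submodule.mem_comap, Algebra.lsmul_coe]
      exact hinv g hg
    have hQ : Submodule.span (Polynomial 𝕜) (⇑e '' ↑s) ≤
        (Module.AEval.mapSubmodule 𝕜 (Polynomial 𝕜) T ⟨P, hpmem⟩ :
          Submodule (Polynomial 𝕜) (Module.AEval' T)) := by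
      rw [Submodule.span_le]
      rintro v ⟨x, hx, rfl⟩
      rw [SetLike.mem_coe, Module.AEval.mem_mapSubmodule_apply, LinearEquiv.symm_apply_apply]
      have hxG : x ∈ G := by
        have := hsubG 0 hdpos x hx
        simpa using this
      exact Submodule.subset_span hxG
    have hPtop : ∀ w : Polynomial 𝕜, w ∈ P := by
      intro w
      have h : e w ∈ (Module.AEval.mapSubmodule 𝕜 (Polynomial 𝕜) T ⟨P, hpmem⟩ :
          Submodule (Polynomial 𝕜) (Module.AEval' T)) :=
        hQ (htop ▸ Submodule.mem_top)
      rwa [Module.AEval.mem_mapSubmodule_apply, LinearEquiv.symm_apply_apply] at h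
    have hfin : Module.Finite 𝕜 (Polynomial 𝕜) :=
      ⟨Submodule.fg_def.mpr ⟨G, hGfin, eq_top_iff.mpr fun w _ => hPtop w⟩⟩
    exact Polynomial.not_finite hfin
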